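/- arXiv:2405.01387 — 2 statements merged into one kernel-verified Lean document; each statement's English description precedes it below -/
import Mathlib

section
/- Every convex polytope X ⊆ ℝ^n is lexicographically stable: for all δ > 0 there exists ε > 0 such that every possible output x̂ of the progressive filling algorithm on (X, ε) satisfies σ_k(x*) − σ_k(x̂) < δ for all k ∈ [n], where x* is the (unique) lexicographic maximum of X. -/
set_option maxHeartbeats 1000000
open scoped Classical



noncomputable def sortedComp {n : ℕ} (x : Fin n → ℝ) (k : Fin n) : ℝ :=
  x (Tuple.sort x k)

def IsLexMax {n : ℕ} (X : Set (Fin n → ℝ)) (y : Fin n → ℝ) : Prop :=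
  y ∈ X ∧ ∀ x ∈ X, x = y ∨ ∃ i : Fin n,
    (∀ j : Fin n, j < i → sortedComp y j = sortedComp x j) ∧
    sortedComp x i < sortedComp y i

/-- The value of the optimization problem at iteration `k` of the progressive
filling algorithm, given previous iterate `y`. -/
noncomputable def Hfun {n : ℕ} (X : Set (Fin n → ℝ)) (k : Fin n) (y : Fin n → ℝ) : ℝ :=
  sSup {v : ℝ | ∃ z ∈ X,
    (∀ i : Fin n, i < k → sortedComp y i ≤ sortedComp z i) ∧ v = sortedComp z k}

/-- `out` is a possible output of the progressive filling algorithm on `(X, ε)`. -/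
def PossibleOutput {n : ℕ} (X : Set (Fin n → ℝ)) (ε : ℝ) (out : Fin n → ℝ) : Prop :=
  ∃ seq : Fin (n + 1) → (Fin n → ℝ),
    seq (Fin.last n) = out ∧
    ∀ k : Fin n,
      seq k.succ ∈ X ∧
      (∀ i : Fin n, i < k → sortedComp (seq k.castSucc) i ≤ sortedComp (seq k.succ) i) ∧
      Hfun X k (seq k.castSucc) - ε ≤ sortedComp (seq k.succ) k


namespace LexAux
section Part1

variable {n : ℕ}

theorem sortedComp_mono (x : Fin n → ℝ) : Monotone (sortedComp x) :=
  Tuple.monotone_sort x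

theorem sortedComp_exists_eq (x : Fin n → ℝ) (i : Fin n) : ∃ j, sortedComp x i = x j :=
  ⟨Tuple.sort x i, rfl⟩

theorem card_filter_comp_perm (p : Fin n → Prop) (e : Equiv.Perm (Fin n)) :
    (Finset.univ.filter fun j => p (e j)).card = (Finset.univ.filter p).card := by
  apply Finset.card_bij' (fun j _ => e j) (fun j _ => e.symm j)
  · intro a ha; simp only [Finset.mem_filter, Finset.mem_univ, true_and] at ha ⊢; exact ha
  · intro a ha; simp only [Finset.mem_filter, Finset.mem_univ, true_and] at ha ⊢
    simpa using ha
  · intro a _; simp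
  · intro a _; simp

/-- If at least `n - i` coordinates of `x` are `≥ c`, then `σ_i(x) ≥ c`. -/
theorem sigma_ge_of_card (x : Fin n → ℝ) (i : Fin n) (c : ℝ)
    (h : n - (i : ℕ) ≤ (Finset.univ.filter fun j => c ≤ x j).card) :
    c ≤ sortedComp x i := by
  by_contra hc
  push_neg at hc
  have hmono := Tuple.monotone_sort x
  have hcard : (Finset.univ.filter fun j => c ≤ x (Tuple.sort x j)).card
      = (Finset.univ.filter fun j => c ≤ x j).card :=
    card_filter_comp_perm (fun j => c ≤ x j) (Tuple.sort x)
  have hsub : (Finset.univ.filter fun j => c ≤ x (Tuple.sort x j)) ⊆ Finset.Ioi i := by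
    intro j hj
    simp only [Finset.mem_filter, Finset.mem_univ, true_and] at hj
    rw [Finset.mem_Ioi]
    by_contra hji
    push_neg at hji
    have : x (Tuple.sort x j) ≤ x (Tuple.sort x i) := hmono hji
    exact absurd (hj.trans this) (not_le.mpr hc)
  have hle : (Finset.univ.filter fun j => c ≤ x (Tuple.sort x j)).card ≤ (Finset.Ioi i).card :=
    Finset.card_le_card hsub
  rw [Fin.card_Ioi, hcard] at hle
  omega

/-- At least `n - i` coordinates of `x` are `≥ σ_i(x)`. -/
theorem card_ge_sigma (x : Fin n → ℝ) (i : Fin n) :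
    n - (i : ℕ) ≤ (Finset.univ.filter fun j => sortedComp x i ≤ x j).card := by
  have hmono := Tuple.monotone_sort x
  have hcard : (Finset.univ.filter fun j => sortedComp x i ≤ x (Tuple.sort x j)).card
      = (Finset.univ.filter fun j => sortedComp x i ≤ x j).card :=
    card_filter_comp_perm (fun j => sortedComp x i ≤ x j) (Tuple.sort x)
  rw [← hcard]
  have hsub : Finset.Ici i ⊆ (Finset.univ.filter fun j => sortedComp x i ≤ x (Tuple.sort x j)) := by
    intro j hj
    rw [Finset.mem_Ici] at hj
    simp only [Finset.mem_filter, Finset.mem_univ, true_and]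
    exact hmono hj
  have := Finset.card_le_card hsub
  rwa [Fin.card_Ici] at this

/-- One-sided Lipschitz bound for sorted components. -/
theorem sigma_le_sigma_add (x y : Fin n → ℝ) (i : Fin n) (r : ℝ)
    (h : ∀ j, y j ≤ x j + r) : sortedComp y i ≤ sortedComp x i + r := by
  have h1 := card_ge_sigma y i
  have hsub : (Finset.univ.filter fun j => sortedComp y i ≤ y j)
      ⊆ (Finset.univ.filter fun j => sortedComp y i - r ≤ x j) := by
    intro j hj
    simp only [Finset.mem_filter, Finset.mem_univ, true_and] at hj ⊢
    have := h j
    linarith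
  have h2 : n - (i : ℕ) ≤ (Finset.univ.filter fun j => sortedComp y i - r ≤ x j).card :=
    h1.trans (Finset.card_le_card hsub)
  have := sigma_ge_of_card x i _ h2
  linarith

theorem abs_sigma_sub_le (x y : Fin n → ℝ) (i : Fin n) (r : ℝ)
    (h : ∀ j, |x j - y j| ≤ r) : |sortedComp x i - sortedComp y i| ≤ r := by
  have h1 : sortedComp x i ≤ sortedComp y i + r :=
    sigma_le_sigma_add y x i r (fun j => by have := abs_le.1 (h j); linarith)
  have h2 : sortedComp y i ≤ sortedComp x i + r :=
    sigma_le_sigma_add x y i r (fun j => by have := abs_le.1 (h j); linarith)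
  rw [abs_le]; constructor <;> linarith

end Part1

section Part2
variable {n : ℕ}

variable {n : ℕ}

theorem le_val_of_strictMono {m : ℕ} (f : Fin m → Fin n) (hf : StrictMono f) (l : Fin m) :
    (l : ℕ) ≤ (f l : ℕ) := by
  obtain ⟨v, hv⟩ := l
  induction v with
  | zero => exact Nat.zero_le _
  | succ v ih =>
      have hv' : v < m := by omega
      have h1 : (f ⟨v, hv'⟩ : ℕ) < (f ⟨v + 1, hv⟩ : ℕ) := hf (by simp [Fin.lt_def])
      have h2 := ih hv'
      have e1 : ((⟨v, hv'⟩ : Fin m) : ℕ) = v := rfl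
      have e2 : ((⟨v + 1, hv⟩ : Fin m) : ℕ) = v + 1 := rfl
      omega

theorem sum_Iic_le_sum_of_card (g : Fin n → ℝ) (hg : Monotone g) (i : Fin n)
    (A : Finset (Fin n)) (hA : A.card = (i : ℕ) + 1) :
    ∑ l ∈ Finset.Iic i, g l ≤ ∑ j ∈ A, g j := by
  have hle : ((i : ℕ) + 1) ≤ n := i.2
  have hIic : Finset.Iic i = Finset.map (Fin.castLEEmb hle) Finset.univ := by
    ext j
    simp only [Finset.mem_Iic, Finset.mem_map, Finset.mem_univ, true_and]
    constructor
    · intro hj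
      exact ⟨⟨(j : ℕ), by omega⟩, by simp [Fin.castLEEmb, Fin.ext_iff]⟩
    · rintro ⟨l, rfl⟩
      have : (l : ℕ) ≤ (i : ℕ) := by omega
      simpa [Fin.le_def, Fin.castLEEmb] using this
  have hAeq : A = Finset.map (A.orderEmbOfFin hA).toEmbedding Finset.univ := by
    symm
    apply Finset.eq_of_subset_of_card_le
    · intro j hj
      simp only [Finset.mem_map, Finset.mem_univ, true_and] at hj
      obtain ⟨l, rfl⟩ := hj
      exact A.orderEmbOfFin_mem hA l
    · simp [hA]
  rw [hIic, hAeq, Finset.sum_map, Finset.sum_map]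
  apply Finset.sum_le_sum
  intro l _
  apply hg
  have h1 : ((Fin.castLEEmb hle) l : ℕ) = (l : ℕ) := rfl
  have h2 : (l : ℕ) ≤ ((A.orderEmbOfFin hA) l : ℕ) :=
    le_val_of_strictMono _ (A.orderEmbOfFin hA).strictMono l
  rw [Fin.le_def]
  simpa [h1] using h2



end Part2

section Part3

noncomputable def psum (x : Fin n → ℝ) (i : Fin n) : ℝ := ∑ l ∈ Finset.Iic i, sortedComp x l

theorem psum_eq_sum_image (x : Fin n → ℝ) (i : Fin n) :
    psum x i = ∑ j ∈ (Finset.Iic i).image (Tuple.sort x), x j := by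
  rw [Finset.sum_image (fun a _ b _ h => (Tuple.sort x).injective h)]
  rfl

theorem card_image_sort (x : Fin n → ℝ) (i : Fin n) :
    ((Finset.Iic i).image (Tuple.sort x)).card = (i : ℕ) + 1 := by
  rw [Finset.card_image_of_injective _ (Tuple.sort x).injective, Fin.card_Iic]

/-- `psum` is at most the sum over any coordinate set of the right cardinality. -/
theorem psum_le_sum (x : Fin n → ℝ) (i : Fin n) (A : Finset (Fin n))
    (hA : A.card = (i : ℕ) + 1) : psum x i ≤ ∑ j ∈ A, x j := by
  classical
  -- compare sums of the monotone function g := x ∘ sort x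
  set g : Fin n → ℝ := fun l => sortedComp x l with hg
  have hmono : Monotone g := sortedComp_mono x
  -- express ∑_{j∈A} x j as a sum of g over the preimage of A
  set B : Finset (Fin n) := A.image (Tuple.sort x).symm with hB
  have hBcard : B.card = (i : ℕ) + 1 := by
    rw [hB, Finset.card_image_of_injective _ (Tuple.sort x).symm.injective, hA]
  have hsum : ∑ j ∈ A, x j = ∑ b ∈ B, g b := by
    rw [hB, Finset.sum_image (fun a _ b _ h => (Tuple.sort x).symm.injective h)]
    apply Finset.sum_congr rfl
    intro a _
    simp [hg, sortedComp]
  rw [hsum]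
  exact sum_Iic_le_sum_of_card g hmono i B hBcard

/-- concavity-type inequality for psum under convex combinations -/
theorem psum_combo_ge (u v : Fin n → ℝ) (mu : ℝ) (h0 : 0 ≤ mu) (h1 : mu ≤ 1) (i : Fin n) :
    (1 - mu) * psum u i + mu * psum v i ≤ psum (fun j => (1 - mu) * u j + mu * v j) i := by
  set w : Fin n → ℝ := fun j => (1 - mu) * u j + mu * v j with hw
  set A : Finset (Fin n) := (Finset.Iic i).image (Tuple.sort w) with hA
  have hcard : A.card = (i : ℕ) + 1 := card_image_sort w i
  have h2 : psum w i = (1 - mu) * (∑ j ∈ A, u j) + mu * (∑ j ∈ A, v j) := by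
    rw [psum_eq_sum_image, ← hA, Finset.mul_sum, Finset.mul_sum, ← Finset.sum_add_distrib]
  rw [h2]
  have hu := psum_le_sum u i A hcard
  have hv := psum_le_sum v i A hcard
  have h1mu : (0:ℝ) ≤ 1 - mu := by linarith
  nlinarith

/-- Claim M : convex combinations of two prefix-optimal points are prefix-optimal. -/
theorem claimM {X : Set (Fin n → ℝ)} (hXc : Convex ℝ X) {xstar : Fin n → ℝ}
    (hstar : IsLexMax X xstar) (k : Fin n) {u : Fin n → ℝ} (hu : u ∈ X)
    (hpre : ∀ i : Fin n, i < k → sortedComp u i = sortedComp xstar i)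
    (mu : ℝ) (h0 : 0 ≤ mu) (h1 : mu ≤ 1) :
    ∀ i : Fin n, i < k →
      sortedComp (fun j => (1 - mu) * u j + mu * xstar j) i = sortedComp xstar i := by
  set w : Fin n → ℝ := fun j => (1 - mu) * u j + mu * xstar j with hwdef
  have hwX : w ∈ X := by
    have h := hXc hu hstar.1 (by linarith : (0:ℝ) ≤ 1 - mu) h0 (by ring)
    have he : w = (1 - mu) • u + mu • xstar := by
      funext j; simp [hwdef, smul_eq_mul]
    rwa [he]
  -- partial sums of w dominate those of xstar on the prefix
  have hps : ∀ l : Fin n, l < k → psum xstar l ≤ psum w l := by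
    intro l hl
    have hpsu : psum u l = psum xstar l := by
      unfold psum
      apply Finset.sum_congr rfl
      intro l' hl'
      exact hpre l' (lt_of_le_of_lt (Finset.mem_Iic.mp hl') hl)
    have := psum_combo_ge u xstar mu h0 h1 l
    rw [hpsu] at this
    calc psum xstar l = (1-mu) * psum xstar l + mu * psum xstar l := by ring
    _ ≤ psum w l := this
  intro i hik
  rcases hstar.2 w hwX with heq | ⟨i0, heq, hlt⟩
  · rw [heq]
  · rcases lt_or_ge i i0 with h | h
    · exact (heq i h).symm
    · -- i0 ≤ i < k : contradiction with partial sums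
      exfalso
      have hi0k : i0 < k := lt_of_le_of_lt h hik
      have hps0 := hps i0 hi0k
      have hIic : Finset.Iic i0 = insert i0 (Finset.Iio i0) := (Finset.Iio_insert i0).symm
      have hexp : psum w i0 = sortedComp w i0 + ∑ l ∈ Finset.Iio i0, sortedComp w l := by
        unfold psum
        rw [hIic, Finset.sum_insert (by simp)]
      have hexps : psum xstar i0 = sortedComp xstar i0 + ∑ l ∈ Finset.Iio i0, sortedComp xstar l := by
        unfold psum
        rw [hIic, Finset.sum_insert (by simp)]
      have hsame : ∑ l ∈ Finset.Iio i0, sortedComp w l = ∑ l ∈ Finset.Iio i0, sortedComp xstar l := by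
        apply Finset.sum_congr rfl
        intro l hl
        exact (heq l (Finset.mem_Iio.mp hl)).symm
      rw [hexp, hexps, hsame] at hps0
      linarith

end Part3

section Part4
variable {n : ℕ}

/-- Claim A : the alignment count lemma. -/
theorem claimA {X : Set (Fin n → ℝ)} (hXc : Convex ℝ X) {xstar : Fin n → ℝ}
    (hstar : IsLexMax X xstar) (k : Fin n) {u : Fin n → ℝ} (hu : u ∈ X)
    (hpre : ∀ i : Fin n, i < k → sortedComp u i = sortedComp xstar i)
    (i : Fin n) (hik : i < k) (M : ℝ) (hM : ∀ j, |u j| ≤ M ∧ |xstar j| ≤ M) :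
    n - (i : ℕ) ≤ (Finset.univ.filter fun j =>
      sortedComp xstar i < xstar j ∨
      (xstar j = sortedComp xstar i ∧ sortedComp xstar i ≤ u j)).card := by
  set θ : ℝ := sortedComp xstar i with hθ
  have hMnn : (0:ℝ) ≤ M := le_trans (abs_nonneg _) (hM (Tuple.sort xstar i)).2
  have hθM : |θ| ≤ M := (hM (Tuple.sort xstar i)).2
  -- choose ρ
  set B1 : Finset (Fin n) := Finset.univ.filter (fun j => xstar j < θ) with hB1
  set gaps : Finset ℝ := B1.image (fun j => θ - xstar j) with hgaps
  set ρ : ℝ := if h : gaps.Nonempty then gaps.min' h else 1 with hρ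
  have hρpos : 0 < ρ := by
    rw [hρ]
    split_ifs with h
    · obtain ⟨j, hj, hje⟩ := Finset.mem_image.mp (gaps.min'_mem h)
      rw [hB1, Finset.mem_filter] at hj
      rw [← hje]; linarith [hj.2]
    · norm_num
  have hρle : ∀ j, xstar j < θ → ρ ≤ θ - xstar j := by
    intro j hj
    have hmem : (θ - xstar j) ∈ gaps := by
      rw [hgaps]
      exact Finset.mem_image_of_mem _ (by rw [hB1]; simp [hj])
    rw [hρ]
    split_ifs with h
    · exact gaps.min'_le _ hmem
    · exact absurd ⟨_, hmem⟩ h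
  have hρle2M : ρ ≤ 2 * M + 1 := by
    rw [hρ]
    split_ifs with h
    · obtain ⟨j, hj, hje⟩ := Finset.mem_image.mp (gaps.min'_mem h)
      have := (hM j).2
      have h1 := abs_le.mp this
      have h2 := abs_le.mp hθM
      rw [← hje]; linarith
    · linarith
  set mu : ℝ := 1 - ρ / (2 * M + 2) with hmu
  have h2M2 : (0:ℝ) < 2 * M + 2 := by linarith
  have hmu0 : 0 ≤ mu := by
    rw [hmu]
    have : ρ / (2 * M + 2) ≤ 1 := by
      rw [div_le_one h2M2]; linarith
    linarith
  have hmu1 : mu ≤ 1 := by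
    rw [hmu]
    have : 0 < ρ / (2 * M + 2) := div_pos hρpos h2M2
    linarith
  have honemu : 1 - mu = ρ / (2 * M + 2) := by rw [hmu]; ring
  have honemupos : 0 < 1 - mu := by rw [honemu]; exact div_pos hρpos h2M2
  set w : Fin n → ℝ := fun j => (1 - mu) * u j + mu * xstar j with hw
  have hwi : sortedComp w i = θ := claimM hXc hstar k hu hpre mu hmu0 hmu1 i hik
  have hcard := card_ge_sigma w i
  rw [hwi] at hcard
  refine le_trans hcard (Finset.card_le_card ?_)
  intro j hj
  rw [Finset.mem_filter] at hj ⊢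
  refine ⟨Finset.mem_univ _, ?_⟩
  have hwj : θ ≤ w j := hj.2
  rcases lt_trichotomy (xstar j) θ with h | h | h
  · -- impossible
    exfalso
    have hgap := hρle j h
    have hub : u j - xstar j ≤ 2 * M := by
      have h1 := abs_le.mp (hM j).1
      have h2 := abs_le.mp (hM j).2
      linarith
    have : w j = xstar j + (1 - mu) * (u j - xstar j) := by rw [hw]; ring
    have hlt : w j < θ := by
      rw [this, honemu]
      have hq : ρ / (2 * M + 2) * (u j - xstar j) ≤ ρ / (2*M+2) * (2*M) := by
        apply mul_le_mul_of_nonneg_left hub (le_of_lt (div_pos hρpos h2M2))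
      have hq2 : ρ / (2*M+2) * (2*M) < ρ := by
        rw [div_mul_eq_mul_div, div_lt_iff₀ h2M2]
        nlinarith
      linarith
    linarith
  · right
    refine ⟨h, ?_⟩
    have : w j = θ + (1 - mu) * (u j - θ) := by
      show (1 - mu) * u j + mu * xstar j = θ + (1 - mu) * (u j - θ)
      rw [h]; ring
    rw [this] at hwj
    nlinarith
  · left; exact h

end Part4

section Part5
variable {n : ℕ}

theorem filter_neg_card (p : Fin n → Prop) :
    (Finset.univ.filter fun j => ¬ p j).card = n - (Finset.univ.filter p).card := by
  have h := Finset.card_filter_add_card_filter_not (s := (Finset.univ : Finset (Fin n)))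
    (p := p)
  simp only [Finset.card_univ, Fintype.card_fin] at h
  omega

/-- The deterministic core construction: coordinate bounds for the perturbed point. -/
theorem construct_bounds {X : Set (Fin n → ℝ)} (hXc : Convex ℝ X) {xstar : Fin n → ℝ}
    (hstar : IsLexMax X xstar) (k : Fin n) {u : Fin n → ℝ} (hu : u ∈ X)
    (hpre : ∀ i : Fin n, i < k → sortedComp u i = sortedComp xstar i)
    (u' : Fin n → ℝ) (M Δ τ r' : ℝ)
    (hM : ∀ j, |u j| ≤ M ∧ |xstar j| ≤ M) (hM1 : 1 ≤ M)
    (hΔpos : 0 < Δ) (hΔ1 : Δ ≤ 1)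
    (V : Finset ℝ) (hV : ∀ j, u j ∈ V ∧ xstar j ∈ V)
    (hgap : ∀ a ∈ V, ∀ b ∈ V, a < b → a + Δ ≤ b)
    (hr' : ∀ j, |u' j - u j| ≤ r') (hr'0 : 0 ≤ r')
    (hτ0 : 0 ≤ τ) (hτ1 : τ ≤ 1) (hr'τ : 4 * r' ≤ τ * Δ)
    (hτsmall : τ * (2 * M + Δ) ≤ Δ / 2) (hr'Δ : 8 * r' ≤ Δ) :
    (∀ i : Fin n, i < k →
      sortedComp u' i ≤ sortedComp (fun j => (1 - τ) * xstar j + τ * u j + (u' j - u j)) i) ∧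
    sortedComp xstar k - 4 * M * τ ≤
      sortedComp (fun j => (1 - τ) * xstar j + τ * u j + (u' j - u j)) k := by
  set z : Fin n → ℝ := fun j => (1 - τ) * xstar j + τ * u j + (u' j - u j) with hz
  constructor
  · intro i hik
    set θ : ℝ := sortedComp xstar i with hθ
    have hθV : θ ∈ V := (hV (Tuple.sort xstar i)).2
    have hθM : |θ| ≤ M := (hM (Tuple.sort xstar i)).2
    have hθu : sortedComp u i = θ := hpre i hik
    set c : ℝ := sortedComp u' i with hc
    have hcθ : |c - θ| ≤ r' := by
      rw [← hθu]
      exact abs_sigma_sub_le u' u i r' hr'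
    have hcθ1 := abs_le.mp hcθ
    -- minimal tied index l₀
    have hFne : (Finset.univ.filter fun l : Fin n => sortedComp xstar l = θ ∧ l ≤ i).Nonempty :=
      ⟨i, by simp [hθ]⟩
    set l₀ : Fin n := (Finset.univ.filter fun l : Fin n => sortedComp xstar l = θ ∧ l ≤ i).min'
      hFne with hl₀
    have hl₀mem := (Finset.univ.filter fun l : Fin n => sortedComp xstar l = θ ∧ l ≤ i).min'_mem
      hFne
    rw [Finset.mem_filter] at hl₀mem
    have hl₀θ : sortedComp xstar l₀ = θ := hl₀mem.2.1
    have hl₀i : l₀ ≤ i := hl₀mem.2.2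
    have hl₀k : l₀ < k := lt_of_le_of_lt hl₀i hik
    have hlt_l₀ : ∀ l : Fin n, l < l₀ → sortedComp xstar l < θ := by
      intro l hl
      have hle : sortedComp xstar l ≤ θ := by
        rw [hθ]; exact sortedComp_mono xstar (le_trans (le_of_lt hl) hl₀i)
      rcases lt_or_eq_of_le hle with h | h
      · exact h
      · exfalso
        have : l₀ ≤ l := Finset.min'_le _ _ (by
          rw [Finset.mem_filter]
          exact ⟨Finset.mem_univ _, h, le_trans (le_of_lt hl) hl₀i⟩)
        exact absurd hl (not_lt.mpr this)
    -- the alignment set P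
    set P : Finset (Fin n) := Finset.univ.filter (fun j =>
      θ < xstar j ∨ (xstar j = θ ∧ θ ≤ u j)) with hP
    have hPcard : n - (l₀ : ℕ) ≤ P.card := by
      have := claimA hXc hstar k hu hpre l₀ hl₀k M hM
      rw [hl₀θ] at this
      exact this
    -- the bad set D
    set D : Finset (Fin n) := Finset.univ.filter (fun j =>
      xstar j = θ ∧ u j = θ ∧ u' j < c) with hD
    -- low coordinates of u
    set L : Finset (Fin n) := Finset.univ.filter (fun j => u j < θ) with hL
    have hLcard : (l₀ : ℕ) ≤ L.card := by
      by_contra hcon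
      push_neg at hcon
      -- then many coordinates of u are ≥ θ
      have hcompl : (Finset.univ.filter fun j => ¬ (u j < θ)).card = n - L.card := by
        rw [hL]; exact filter_neg_card _
      have hl₀pos : 0 < (l₀ : ℕ) := by
        rcases Nat.eq_zero_or_pos (l₀ : ℕ) with h | h
        · omega
        · exact h
      set l₁ : Fin n := ⟨(l₀ : ℕ) - 1, by omega⟩ with hl₁
      have hl₁l₀ : l₁ < l₀ := by
        rw [Fin.lt_def]; simp [hl₁]; omega
      have hcard2 : n - (l₁ : ℕ) ≤ (Finset.univ.filter fun j => θ ≤ u j).card := by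
        have heq : (Finset.univ.filter fun j => θ ≤ u j)
            = (Finset.univ.filter fun j => ¬ (u j < θ)) := by
          apply Finset.filter_congr
          intro j _
          simp [not_lt]
        rw [heq, hcompl]
        have : (l₁ : ℕ) = (l₀ : ℕ) - 1 := rfl
        omega
      have := sigma_ge_of_card u l₁ θ hcard2
      have hpre1 : sortedComp u l₁ = sortedComp xstar l₁ :=
        hpre l₁ (lt_trans hl₁l₀ hl₀k)
      have := hlt_l₀ l₁ hl₁l₀
      linarith [hpre1 ▸ sigma_ge_of_card u l₁ θ hcard2]
    -- low coordinates of u' 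
    set L' : Finset (Fin n) := Finset.univ.filter (fun j => u' j < c) with hL'
    have hL'card : L'.card ≤ (i : ℕ) := by
      have h1 := card_ge_sigma u' i
      have hcompl : L'.card = n - (Finset.univ.filter fun j => ¬ (u' j < c)).card := by
        have h2 : (Finset.univ.filter fun j => ¬ (u' j < c)).card = n - L'.card := by
          rw [hL']; exact filter_neg_card _
        have h3 : L'.card ≤ n := by
          rw [hL']
          exact le_trans (Finset.card_filter_le _ _) (by simp)
        omega
      have heq : (Finset.univ.filter fun j => ¬ (u' j < c))
          = (Finset.univ.filter fun j => c ≤ u' j) := by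
        apply Finset.filter_congr
        intro j _
        simp [not_lt]
      rw [hcompl, heq]
      have h4 : (Finset.univ.filter fun j => c ≤ u' j).card ≤ n := 
        le_trans (Finset.card_filter_le _ _) (by simp)
      have h5 : n - (i:ℕ) ≤ (Finset.univ.filter fun j => c ≤ u' j).card := by
        rw [hc]; exact card_ge_sigma u' i
      have h6 : (i:ℕ) < n := i.2
      omega
    -- L ⊆ L'
    have hLL' : L ⊆ L' := by
      intro j hj
      rw [hL, Finset.mem_filter] at hj
      rw [hL', Finset.mem_filter]
      refine ⟨Finset.mem_univ _, ?_⟩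
      have hgapj : u j + Δ ≤ θ := hgap _ (hV j).1 _ hθV hj.2
      have h2 := (abs_le.mp (hr' j)).2
      have h3 := hcθ1.1
      linarith
    -- D ⊆ L' and D disjoint from L
    have hDL' : D ⊆ L' := by
      intro j hj
      rw [hD, Finset.mem_filter] at hj
      rw [hL', Finset.mem_filter]
      exact ⟨Finset.mem_univ _, hj.2.2.2⟩
    have hdisj : Disjoint D L := by
      rw [Finset.disjoint_left]
      intro j hj hj2
      rw [hD, Finset.mem_filter] at hj
      rw [hL, Finset.mem_filter] at hj2
      linarith [hj.2.2.1, hj2.2]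
    have hDcard : D.card + (l₀ : ℕ) ≤ (i : ℕ) := by
      have hunion : D ∪ L ⊆ L' := Finset.union_subset hDL' hLL'
      have h1 : (D ∪ L).card = D.card + L.card := Finset.card_union_of_disjoint hdisj
      have h2 := Finset.card_le_card hunion
      omega
    -- pointwise bound on P \ D
    have hpoint : ∀ j ∈ P \ D, c ≤ z j := by
      intro j hj
      rw [Finset.mem_sdiff] at hj
      obtain ⟨hjP, hjD⟩ := hj
      rw [hP, Finset.mem_filter] at hjP
      have hzj : z j = (1 - τ) * xstar j + τ * u j + (u' j - u j) := rfl
      have huM := (hM j).1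
      have hxM := (hM j).2
      have huMl := abs_le.mp huM
      have hxMl := abs_le.mp hxM
      have hθMl := abs_le.mp hθM
      rcases hjP.2 with h | ⟨hx, hu2⟩
      · -- θ < xstar j : far above
        have hgapj : θ + Δ ≤ xstar j := hgap _ hθV _ (hV j).2 h
        have hr'j := abs_le.mp (hr' j)
        have h1τ : (0:ℝ) ≤ 1 - τ := by linarith
        rw [hzj]
        have e1 : (1 - τ) * (θ + Δ) ≤ (1 - τ) * xstar j :=
          mul_le_mul_of_nonneg_left hgapj h1τ
        nlinarith
      · rcases lt_or_eq_of_le hu2 with h | h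
        · -- θ < u j
          have hgapj : θ + Δ ≤ u j := hgap _ hθV _ (hV j).1 h
          have hr'j := abs_le.mp (hr' j)
          rw [hzj, hx]
          nlinarith
        · -- u j = θ : j ∉ D forces u' j ≥ c
          have hjD2 : ¬ (u' j < c) := by
            intro hcon
            apply hjD
            rw [hD, Finset.mem_filter]
            exact ⟨Finset.mem_univ _, hx, h.symm, hcon⟩
          push_neg at hjD2
          have : z j = u' j := by rw [hzj, hx, ← h]; ring
          linarith [this ▸ hjD2]
    -- count and conclude
    have hsub : P \ D ⊆ Finset.univ.filter (fun j => c ≤ z j) := by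
      intro j hj
      rw [Finset.mem_filter]
      exact ⟨Finset.mem_univ _, hpoint j hj⟩
    have hcount : n - (i : ℕ) ≤ (Finset.univ.filter (fun j => c ≤ z j)).card := by
      have h1 : P.card - D.card ≤ (P \ D).card := Finset.le_card_sdiff D P
      have h2 := Finset.card_le_card hsub
      have h3 : (i:ℕ) < n := i.2
      omega
    exact sigma_ge_of_card z i c hcount
  · -- the σ_k bound
    have hbound : ∀ j, |xstar j - z j| ≤ 4 * M * τ := by
      intro j
      have hzj : z j = (1 - τ) * xstar j + τ * u j + (u' j - u j) := rfl
      have : xstar j - z j = τ * (xstar j - u j) - (u' j - u j) := by rw [hzj]; ring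
      rw [this]
      have h1 : |τ * (xstar j - u j)| ≤ τ * (2 * M) := by
        rw [abs_mul, abs_of_nonneg hτ0]
        apply mul_le_mul_of_nonneg_left _ hτ0
        have := abs_le.mp (hM j).1
        have := abs_le.mp (hM j).2
        rw [abs_le]; constructor <;> linarith
      have h2 : |u' j - u j| ≤ τ * Δ / 4 := le_trans (hr' j) (by linarith)
      have h3 : τ * Δ / 4 ≤ τ * M := by nlinarith
      calc |τ * (xstar j - u j) - (u' j - u j)|
          ≤ |τ * (xstar j - u j)| + |u' j - u j| := abs_sub _ _
      _ ≤ τ * (2 * M) + τ * M := by linarith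
      _ ≤ 4 * M * τ := by nlinarith
    have := sigma_le_sigma_add z xstar k (4 * M * τ) (fun j => by
      have := abs_le.mp (hbound j); linarith)
    linarith
end Part5

section Part6
variable {n : ℕ}

theorem bddAbove_Hset {X : Set (Fin n → ℝ)} (M : ℝ) (hMX : ∀ z ∈ X, ∀ j, |z j| ≤ M)
    (k : Fin n) (y : Fin n → ℝ) :
    BddAbove {v : ℝ | ∃ z ∈ X,
      (∀ i : Fin n, i < k → sortedComp y i ≤ sortedComp z i) ∧ v = sortedComp z k} := by
  refine ⟨M, ?_⟩
  rintro v ⟨z, hz, _, rfl⟩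
  obtain ⟨j, hj⟩ := sortedComp_exists_eq z k
  rw [hj]
  exact le_trans (le_abs_self _) (hMX z hz j)

theorem le_Hfun {X : Set (Fin n → ℝ)} (M : ℝ) (hMX : ∀ z ∈ X, ∀ j, |z j| ≤ M)
    (k : Fin n) (y : Fin n → ℝ) {z : Fin n → ℝ} (hz : z ∈ X)
    (hcon : ∀ i : Fin n, i < k → sortedComp y i ≤ sortedComp z i) :
    sortedComp z k ≤ Hfun X k y :=
  le_csSup (bddAbove_Hset M hMX k y) ⟨z, hz, hcon, rfl⟩

/-- The key semicontinuity lemma: eventually along the ultrafilter, the optimization value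
`Hfun` at the iterates is nearly `σ_k(x*)`. -/
theorem eventual_Hfun {S : Finset (Fin n → ℝ)} {X : Set (Fin n → ℝ)}
    (hX : X = convexHull ℝ (S : Set (Fin n → ℝ))) {xstar : Fin n → ℝ}
    (hstar : IsLexMax X xstar) (M : ℝ) (hMX : ∀ z ∈ X, ∀ j, |z j| ≤ M) (hM1 : 1 ≤ M)
    (k : Fin n) {u : Fin n → ℝ} (hu : u ∈ X)
    (hpre : ∀ i : Fin n, i < k → sortedComp u i = sortedComp xstar i)
    (U : Ultrafilter ℕ) (u' : ℕ → (Fin n → ℝ)) (hu'X : ∀ m, u' m ∈ X)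
    (htend : Filter.Tendsto u' U (nhds u)) (ρ : ℝ) (hρ : 0 < ρ) :
    ∀ᶠ m in (U : Filter ℕ), sortedComp xstar k - ρ ≤ Hfun X k (u' m) := by
  have hXc : Convex ℝ X := hX ▸ convex_convexHull ℝ _
  -- weights of the iterates
  have hw : ∀ m : ℕ, ∃ w : (Fin n → ℝ) → ℝ, (∀ y ∈ S, 0 ≤ w y) ∧ ∑ y ∈ S, w y = 1 ∧
      ∑ y ∈ S, w y • y = u' m := by
    intro m
    have := hu'X m
    rw [hX, Finset.mem_convexHull] at this
    obtain ⟨w, hw0, hw1, hwc⟩ := this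
    exact ⟨w, hw0, hw1, by rwa [Finset.centerMass_eq_of_sum_1 _ _ hw1] at hwc⟩
  choose w hw0 hw1 hwsum using hw
  -- weights of xstar
  have hxs : ∃ α : (Fin n → ℝ) → ℝ, (∀ y ∈ S, 0 ≤ α y) ∧ ∑ y ∈ S, α y = 1 ∧
      ∑ y ∈ S, α y • y = xstar := by
    have := hstar.1
    rw [hX, Finset.mem_convexHull] at this
    obtain ⟨α, h0, h1, hc⟩ := this
    exact ⟨α, h0, h1, by rwa [Finset.centerMass_eq_of_sum_1 _ _ h1] at hc⟩
  obtain ⟨α, hα0, hα1, hαsum⟩ := hxs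
  -- limit weights along the ultrafilter
  have hlim : ∀ y : Fin n → ℝ, ∃ c : ℝ, 0 ≤ c ∧
      Filter.Tendsto (fun m => if y ∈ S then w m y else 0) (U : Filter ℕ) (nhds c) := by
    intro y
    by_cases hy : y ∈ S
    · have hmem : ∀ m, (if y ∈ S then w m y else 0) ∈ Set.Icc (0:ℝ) 1 := by
        intro m
        rw [if_pos hy]
        refine ⟨hw0 m y hy, ?_⟩
        rw [← hw1 m]
        exact Finset.single_le_sum (fun z hz => hw0 m z hz) hy
      have hle : ((U.map fun m => if y ∈ S then w m y else 0) : Filter ℝ)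
          ≤ Filter.principal (Set.Icc 0 1) := by
        rw [Ultrafilter.coe_map]
        exact Filter.le_principal_iff.mpr
          (Filter.mem_map.mpr (Filter.Eventually.of_forall hmem))
      obtain ⟨c, hc, hconv⟩ := isCompact_Icc.ultrafilter_le_nhds _ hle
      refine ⟨c, hc.1, ?_⟩
      rw [Filter.Tendsto, ← Ultrafilter.coe_map]
      exact hconv
    · exact ⟨0, le_refl _, by simp [hy]⟩
  choose lam hlam0 hlamtend using hlim
  have hwt : ∀ y ∈ S, Filter.Tendsto (fun m => w m y) (U : Filter ℕ) (nhds (lam y)) := by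
    intro y hy
    have := hlamtend y
    simpa [if_pos hy] using this
  -- sum of limit weights is 1
  have hsum1 : ∑ y ∈ S, lam y = 1 := by
    have h1 : Filter.Tendsto (fun m => ∑ y ∈ S, w m y) (U : Filter ℕ)
        (nhds (∑ y ∈ S, lam y)) := by
      apply tendsto_finset_sum
      intro y hy
      exact hwt y hy
    have h2 : Filter.Tendsto (fun m => ∑ y ∈ S, w m y) (U : Filter ℕ) (nhds 1) := by
      simp only [hw1]
      exact tendsto_const_nhds
    exact tendsto_nhds_unique h1 h2
  -- limit weights represent u
  have husum : ∑ y ∈ S, lam y • y = u := by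
    have h1 : Filter.Tendsto (fun m => ∑ y ∈ S, w m y • y) (U : Filter ℕ)
        (nhds (∑ y ∈ S, lam y • y)) := by
      apply tendsto_finset_sum
      intro y hy
      exact (hwt y hy).smul_const y
    have h2 : Filter.Tendsto (fun m => ∑ y ∈ S, w m y • y) (U : Filter ℕ) (nhds u) := by
      simp only [hwsum]
      exact htend
    exact tendsto_nhds_unique h1 h2
  -- support of the limit weights
  have hsupp : (S.filter fun y => 0 < lam y).Nonempty := by
    by_contra hcon
    rw [Finset.not_nonempty_iff_eq_empty, Finset.filter_eq_empty_iff] at hcon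
    have : ∑ y ∈ S, lam y = 0 := by
      apply Finset.sum_eq_zero
      intro y hy
      have := hcon hy
      have := hlam0 y
      push_neg at *
      linarith [hcon hy]
    rw [hsum1] at this
    norm_num at this
  set cmin : ℝ := ((S.filter fun y => 0 < lam y).image lam).min' (hsupp.image lam) with hcmin
  have hcminpos : 0 < cmin := by
    obtain ⟨y, hy, hye⟩ := Finset.mem_image.mp (((S.filter fun y => 0 < lam y).image lam).min'_mem
      (hsupp.image lam))
    rw [Finset.mem_filter] at hy
    rw [hcmin, ← hye]
    exact hy.2
  have hcminle : ∀ y ∈ S, 0 < lam y → cmin ≤ lam y := by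
    intro y hy hpos
    apply Finset.min'_le
    exact Finset.mem_image_of_mem lam (Finset.mem_filter.mpr ⟨hy, hpos⟩)
  -- defect sequences
  set η : ℕ → ℝ := fun m => (∑ y ∈ S, |w m y - lam y|) / cmin with hη
  have hη0 : ∀ m, 0 ≤ η m := by
    intro m
    apply div_nonneg _ (le_of_lt hcminpos)
    exact Finset.sum_nonneg (fun y _ => abs_nonneg _)
  have hηtend : Filter.Tendsto η (U : Filter ℕ) (nhds 0) := by
    have h1 : Filter.Tendsto (fun m => ∑ y ∈ S, |w m y - lam y|) (U : Filter ℕ) (nhds 0) := by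
      have : Filter.Tendsto (fun m => ∑ y ∈ S, |w m y - lam y|) (U : Filter ℕ)
          (nhds (∑ y ∈ S, |lam y - lam y|)) := by
        apply tendsto_finset_sum
        intro y hy
        exact (((hwt y hy).sub tendsto_const_nhds).abs)
      simpa using this
    have := h1.div_const cmin
    simpa [hη] using this
  set r' : ℕ → ℝ := fun m => dist (u' m) u with hr'def
  have hr'0 : ∀ m, 0 ≤ r' m := fun m => dist_nonneg
  have hr'bd : ∀ m j, |u' m j - u j| ≤ r' m := by
    intro m j
    rw [← Real.dist_eq]
    exact dist_le_pi_dist (u' m) u j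
  have hr'tend : Filter.Tendsto r' (U : Filter ℕ) (nhds 0) :=
    tendsto_iff_dist_tendsto_zero.mp htend
  -- the gap Δ
  set V : Finset ℝ := (Finset.univ.image u) ∪ (Finset.univ.image xstar) with hV
  have hVmem : ∀ j, u j ∈ V ∧ xstar j ∈ V := by
    intro j
    constructor
    · exact Finset.mem_union_left _ (Finset.mem_image_of_mem u (Finset.mem_univ j))
    · exact Finset.mem_union_right _ (Finset.mem_image_of_mem xstar (Finset.mem_univ j))
  set gaps : Finset ℝ := ((V ×ˢ V).filter fun p => p.1 < p.2).image (fun p => p.2 - p.1)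
    with hgapsdef
  set Δ : ℝ := (insert (1:ℝ) gaps).min' (Finset.insert_nonempty _ _) with hΔdef
  have hΔpos : 0 < Δ := by
    have : ∀ x ∈ insert (1:ℝ) gaps, 0 < x := by
      intro x hx
      rcases Finset.mem_insert.mp hx with h | h
      · rw [h]; norm_num
      · obtain ⟨p, hp, hpe⟩ := Finset.mem_image.mp h
        rw [Finset.mem_filter] at hp
        rw [← hpe]
        linarith [hp.2]
    exact this _ ((insert (1:ℝ) gaps).min'_mem _)
  have hΔ1 : Δ ≤ 1 := Finset.min'_le _ _ (Finset.mem_insert_self _ _)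
  have hgap : ∀ a ∈ V, ∀ b ∈ V, a < b → a + Δ ≤ b := by
    intro a ha b hb hab
    have hmem : b - a ∈ gaps := by
      rw [hgapsdef]
      refine Finset.mem_image.mpr ⟨(a, b), ?_, rfl⟩
      rw [Finset.mem_filter, Finset.mem_product]
      exact ⟨⟨ha, hb⟩, hab⟩
    have := Finset.min'_le (insert (1:ℝ) gaps) _ (Finset.mem_insert_of_mem hmem)
    rw [← hΔdef] at this
    linarith
  -- the smallness threshold
  have hMpos : (0:ℝ) < M := lt_of_lt_of_le one_pos hM1
  set ρ' : ℝ := min (ρ / (4 * M)) (min (Δ / (2 * (2 * M + Δ))) 1) with hρ'def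
  have hρ'pos : 0 < ρ' := by
    apply lt_min
    · positivity
    · apply lt_min
      · positivity
      · norm_num
  -- eventual smallness
  have E1 : ∀ᶠ m in (U : Filter ℕ), η m < ρ' := hηtend.eventually_lt_const hρ'pos
  have E2 : ∀ᶠ m in (U : Filter ℕ), r' m < min (Δ / 8) (Δ * ρ' / 4) := by
    apply hr'tend.eventually_lt_const
    apply lt_min
    · exact div_pos hΔpos (by norm_num)
    · exact div_pos (mul_pos hΔpos hρ'pos) (by norm_num)
  filter_upwards [E1, E2] with m hm1 hm2
  -- parameters for this m
  set τ : ℝ := max (η m) (4 * r' m / Δ) with hτdef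
  have hτ0 : 0 ≤ τ := le_trans (hη0 m) (le_max_left _ _)
  have hr'ρ' : 4 * r' m / Δ ≤ ρ' := by
    rw [div_le_iff₀ hΔpos]
    have := (lt_min_iff.mp hm2).2
    nlinarith
  have hτρ' : τ ≤ ρ' := max_le (le_of_lt hm1) hr'ρ'
  have hτ1 : τ ≤ 1 := le_trans hτρ' (le_trans (min_le_right _ _) (min_le_right _ _))
  have hr'τ : 4 * r' m ≤ τ * Δ := by
    have h1 : 4 * r' m / Δ ≤ τ := le_max_right _ _
    rw [div_le_iff₀ hΔpos] at h1
    linarith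
  have hτsmall : τ * (2 * M + Δ) ≤ Δ / 2 := by
    have h1 : τ ≤ Δ / (2 * (2 * M + Δ)) :=
      le_trans hτρ' (le_trans (min_le_right _ _) (min_le_left _ _))
    have h2 : (0:ℝ) < 2 * M + Δ := by linarith
    rw [le_div_iff₀ (by linarith : (0:ℝ) < 2 * (2 * M + Δ))] at h1
    nlinarith
  have hr'Δ : 8 * r' m ≤ Δ := by
    have := (lt_min_iff.mp hm2).1
    linarith
  -- bounds on u, xstar needed by the core lemma
  have hMux : ∀ j, |u j| ≤ M ∧ |xstar j| ≤ M := fun j => ⟨hMX u hu j, hMX xstar hstar.1 j⟩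
  -- the constructed point z
  set z : Fin n → ℝ := fun j => (1 - τ) * xstar j + τ * u j + (u' m j - u j) with hzdef
  -- z belongs to X via explicit convex weights
  have hzX : z ∈ X := by
    set β : (Fin n → ℝ) → ℝ := fun y => (1 - τ) * α y + (τ - η m) * lam y
      + (w m y - (1 - η m) * lam y) with hβdef
    have hβ0 : ∀ y ∈ S, 0 ≤ β y := by
      intro y hy
      have h1 : 0 ≤ (1 - τ) * α y := mul_nonneg (by linarith) (hα0 y hy)
      have h2 : 0 ≤ (τ - η m) * lam y :=
        mul_nonneg (by have := le_max_left (η m) (4 * r' m / Δ); linarith) (hlam0 y)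
      have h3 : 0 ≤ w m y - (1 - η m) * lam y := by
        rcases eq_or_lt_of_le (hlam0 y) with h | h
        · have : w m y - (1 - η m) * lam y = w m y := by rw [← h]; ring
          rw [this]
          exact hw0 m y hy
        · have hcle : cmin ≤ lam y := hcminle y hy h
          have habs : |w m y - lam y| ≤ ∑ y' ∈ S, |w m y' - lam y'| :=
            Finset.single_le_sum (f := fun y' => |w m y' - lam y'|)
              (fun y' _ => abs_nonneg _) hy
          have hsum : ∑ y' ∈ S, |w m y' - lam y'| = η m * cmin := by
            rw [hη]
            field_simp
          have h4 := (abs_le.mp habs).1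
          rw [hsum] at h4
          have h5 : η m * cmin ≤ η m * lam y :=
            mul_le_mul_of_nonneg_left hcle (hη0 m)
          nlinarith
      show 0 ≤ (1 - τ) * α y + (τ - η m) * lam y + (w m y - (1 - η m) * lam y)
      linarith
    have hβ1 : ∑ y ∈ S, β y = 1 := by
      rw [hβdef]
      simp only []
      rw [Finset.sum_add_distrib, Finset.sum_add_distrib]
      rw [← Finset.mul_sum, ← Finset.mul_sum, hα1, hsum1]
      rw [Finset.sum_sub_distrib, ← Finset.mul_sum, hsum1, hw1]
      ring
    have hβsum : ∑ y ∈ S, β y • y = z := by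
      have hexp : ∀ y ∈ S, β y • y = (1 - τ) • (α y • y) + (τ - η m) • (lam y • y)
          + (w m y • y - (1 - η m) • (lam y • y)) := by
        intro y _
        rw [hβdef]
        simp only [smul_smul, ← add_smul, ← sub_smul]
      rw [Finset.sum_congr rfl hexp]
      rw [Finset.sum_add_distrib, Finset.sum_add_distrib, Finset.sum_sub_distrib]
      rw [← Finset.smul_sum, ← Finset.smul_sum, ← Finset.smul_sum]
      rw [hαsum, husum, hwsum]
      funext j
      simp only [Pi.add_apply, Pi.sub_apply, Pi.smul_apply, smul_eq_mul, hzdef]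
      ring
    rw [← hβsum, hX]
    exact (convex_convexHull ℝ (S : Set (Fin n → ℝ))).sum_mem hβ0 hβ1
      (fun y hy => subset_convexHull ℝ _ hy)
  -- apply the core bounds
  have hcore := construct_bounds hXc hstar k hu hpre (u' m) M Δ τ (r' m) hMux hM1 hΔpos hΔ1
    V hVmem hgap (hr'bd m) (hr'0 m) hτ0 hτ1 hr'τ hτsmall hr'Δ
  have hHge : sortedComp z k ≤ Hfun X k (u' m) :=
    le_Hfun M hMX k (u' m) hzX (fun i hik => hcore.1 i hik)
  have hfin : sortedComp xstar k - ρ ≤ sortedComp z k := by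
    have h1 := hcore.2
    have h2 : 4 * M * τ ≤ 4 * M * ρ' := by nlinarith
    have h3 : ρ' ≤ ρ / (4 * M) := min_le_left _ _
    have h4 : 4 * M * ρ' ≤ ρ := by
      rw [le_div_iff₀ (by linarith : (0:ℝ) < 4 * M)] at h3
      linarith
    linarith
  linarith
end Part6

section Part7
variable {n : ℕ}

theorem tendsto_sortedComp {F : ℕ → Fin n → ℝ} {L : Fin n → ℝ} {l : Filter ℕ}
    (h : Filter.Tendsto F l (nhds L)) (i : Fin n) :
    Filter.Tendsto (fun m => sortedComp (F m) i) l (nhds (sortedComp L i)) := by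
  rw [Metric.tendsto_nhds]
  intro ε hε
  have h2 : ∀ᶠ m in l, dist (F m) L < ε := (Metric.tendsto_nhds.mp h) ε hε
  filter_upwards [h2] with m hm
  rw [Real.dist_eq]
  have hb : ∀ j, |F m j - L j| ≤ dist (F m) L := by
    intro j
    rw [← Real.dist_eq]
    exact dist_le_pi_dist (F m) L j
  have := abs_sigma_sub_le (F m) L i (dist (F m) L) hb
  exact lt_of_le_of_lt this hm

theorem main_contradiction {S : Finset (Fin n → ℝ)} {X : Set (Fin n → ℝ)}
    (hX : X = convexHull ℝ (S : Set (Fin n → ℝ))) {xstar : Fin n → ℝ}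
    (hstar : IsLexMax X xstar) (δ : ℝ) (hδ : 0 < δ)
    (sq : ℕ → Fin (n + 1) → (Fin n → ℝ)) (kk : ℕ → Fin n)
    (hstep : ∀ m : ℕ, ∀ l : Fin n, sq m l.succ ∈ X ∧
      (∀ i : Fin n, i < l → sortedComp (sq m l.castSucc) i ≤ sortedComp (sq m l.succ) i) ∧
      Hfun X l (sq m l.castSucc) - 1 / ((m : ℝ) + 1) ≤ sortedComp (sq m l.succ) l)
    (hdef : ∀ m : ℕ, δ ≤ sortedComp xstar (kk m) - sortedComp (sq m (Fin.last n)) (kk m)) :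
    False := by
  have hXc : Convex ℝ X := hX ▸ convex_convexHull ℝ _
  have hXcomp : IsCompact X := hX ▸ S.finite_toSet.isCompact_convexHull ℝ
  -- a uniform bound
  obtain ⟨r, hr⟩ := hXcomp.isBounded.subset_closedBall 0
  set M : ℝ := max r 1 with hMdef
  have hM1 : (1:ℝ) ≤ M := le_max_right _ _
  have hMX : ∀ z ∈ X, ∀ j, |z j| ≤ M := by
    intro z hz j
    have h1 : ‖z‖ ≤ r := mem_closedBall_zero_iff.mp (hr hz)
    have h2 : ‖z j‖ ≤ ‖z‖ := norm_le_pi_norm z j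
    rw [Real.norm_eq_abs] at h2
    exact le_trans h2 (le_trans h1 (le_max_left _ _))
  -- the ultrafilter
  obtain ⟨U, hU⟩ := Filter.exists_ultrafilter_le (Filter.atTop : Filter ℕ)
  -- modified sequences, constant at index 0
  set G : Fin (n + 1) → ℕ → (Fin n → ℝ) := fun j m => if j = 0 then xstar else sq m j
    with hGdef
  have hGX : ∀ (j : Fin (n+1)) (m : ℕ), G j m ∈ X := by
    intro j m
    by_cases hj : j = 0
    · simp only [hGdef, if_pos hj]
      exact hstar.1
    · simp only [hGdef, if_neg hj]
      have h0 : (0:ℕ) < (j:ℕ) := by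
        rcases Nat.eq_zero_or_pos (j:ℕ) with h | h
        · exact absurd (Fin.ext h) hj
        · exact h
      set l : Fin n := ⟨(j:ℕ) - 1, by have := j.isLt; omega⟩ with hl
      have hls : l.succ = j := by
        apply Fin.ext
        simp [hl]
        omega
      rw [← hls]
      exact (hstep m l).1
  have hGeq : ∀ j : Fin (n+1), j ≠ 0 → G j = fun m => sq m j := by
    intro j hj
    funext m
    simp only [hGdef, if_neg hj]
  -- limits along the ultrafilter
  have hlims : ∀ j : Fin (n+1), ∃ a ∈ X, Filter.Tendsto (G j) (U : Filter ℕ) (nhds a) := by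
    intro j
    have hle : ((U.map (G j)) : Filter (Fin n → ℝ)) ≤ Filter.principal X := by
      rw [Ultrafilter.coe_map]
      exact Filter.le_principal_iff.mpr
        (Filter.mem_map.mpr (Filter.Eventually.of_forall (fun m => hGX j m)))
    obtain ⟨a, ha, hconv⟩ := hXcomp.ultrafilter_le_nhds _ hle
    refine ⟨a, ha, ?_⟩
    rw [Filter.Tendsto, ← Ultrafilter.coe_map]
    exact hconv
  choose sl hslX hsltend using hlims
  -- the vanishing error term
  have hεtend : Filter.Tendsto (fun m : ℕ => 1 / ((m:ℝ) + 1)) (U : Filter ℕ) (nhds 0) :=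
    tendsto_one_div_add_atTop_nhds_zero_nat.mono_left hU
  -- the inductive step
  have step : ∀ k : Fin n,
      (∀ i' : Fin n, (i' : ℕ) < (k : ℕ) → ∀ j : Fin (n+1), (i' : ℕ) < (j : ℕ) →
        sortedComp (sl j) i' = sortedComp xstar i') →
      ∀ j : Fin (n+1), (k : ℕ) < (j : ℕ) → sortedComp (sl j) k = sortedComp xstar k := by
    intro k IHk
    -- (α) eventual lower bound on Hfun
    have hHev : ∀ ρ : ℝ, 0 < ρ → ∀ᶠ m in (U : Filter ℕ),
        sortedComp xstar k - ρ ≤ Hfun X k (sq m k.castSucc) := by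
      intro ρ hρ
      by_cases hk : (k : ℕ) = 0
      · apply Filter.Eventually.of_forall
        intro m
        have h1 : sortedComp xstar k ≤ Hfun X k (sq m k.castSucc) := by
          apply le_Hfun M hMX k _ hstar.1
          intro i hik
          exfalso
          have : (i : ℕ) < (k : ℕ) := hik
          omega
        linarith
      · -- apply the key lemma
        have hcs0 : k.castSucc ≠ 0 := by
          intro hcon
          exact hk (by simpa using congrArg Fin.val hcon)
        have hpre : ∀ i : Fin n, i < k → sortedComp (sl k.castSucc) i = sortedComp xstar i := by
          intro i hik
          apply IHk i hik k.castSucc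
          simpa using hik
        have hu'X : ∀ m, sq m k.castSucc ∈ X := by
          intro m
          have h := hGX k.castSucc m
          simpa [hGdef, hcs0] using h
        have htd : Filter.Tendsto (fun m => sq m k.castSucc) (U : Filter ℕ)
            (nhds (sl k.castSucc)) := by
          have := hsltend k.castSucc
          rwa [hGeq k.castSucc hcs0] at this
        exact eventual_Hfun hX hstar M hMX hM1 k (hslX k.castSucc) hpre U _ hu'X htd ρ hρ
    -- (α') lower bound at k.succ
    have hα : sortedComp xstar k ≤ sortedComp (sl k.succ) k := by
      by_contra hcon
      push_neg at hcon
      set ρ : ℝ := (sortedComp xstar k - sortedComp (sl k.succ) k) / 2 with hρdef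
      have hρpos : 0 < ρ := by rw [hρdef]; linarith
      have h1 : Filter.Tendsto (fun m => sortedComp (G k.succ m) k + 1 / ((m:ℝ) + 1))
          (U : Filter ℕ) (nhds (sortedComp (sl k.succ) k + 0)) :=
        (tendsto_sortedComp (hsltend k.succ) k).add hεtend
      have h2 : ∀ᶠ m in (U : Filter ℕ),
          sortedComp xstar k - ρ ≤ sortedComp (G k.succ m) k + 1 / ((m:ℝ) + 1) := by
        filter_upwards [hHev ρ hρpos] with m hm
        have h3 := (hstep m k).2.2
        have h4 : G k.succ m = sq m k.succ := by
          rw [hGdef]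
          simp only [if_neg (Fin.succ_ne_zero k)]
        rw [h4]
        linarith
      have h5 := ge_of_tendsto h1 h2
      rw [hρdef] at h5
      linarith
    -- (γ) chain: lower bound propagates
    have hchain : ∀ d : ℕ, ∀ j : Fin (n+1), (j : ℕ) = (k : ℕ) + 1 + d →
        sortedComp xstar k ≤ sortedComp (sl j) k := by
      intro d
      induction d with
      | zero =>
          intro j hj
          have : j = k.succ := by apply Fin.ext; simpa using hj
          rw [this]
          exact hα
      | succ d IH =>
          intro j hj
          have hjlt := j.isLt
          set l : Fin n := ⟨(k:ℕ) + 1 + d, by omega⟩ with hldef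
          have hlcs : (l.castSucc : Fin (n+1)) = ⟨(k:ℕ) + 1 + d, by omega⟩ := by
            apply Fin.ext; simp [hldef]
          have hlsucc : l.succ = j := by
            apply Fin.ext; simp [hldef]; omega
          have hkl : k < l := by
            rw [Fin.lt_def]
            show (k : ℕ) < (k:ℕ) + 1 + d
            omega
          have hmono : ∀ m, sortedComp (sq m l.castSucc) k ≤ sortedComp (sq m l.succ) k :=
            fun m => (hstep m l).2.1 k hkl
          have hcs0 : (l.castSucc : Fin (n+1)) ≠ 0 := by
            rw [hlcs]
            intro hcon
            have : (k:ℕ) + 1 + d = 0 := by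
              have := congrArg Fin.val hcon
              simpa using this
            omega
          have hs0 : (l.succ : Fin (n+1)) ≠ 0 := Fin.succ_ne_zero l
          have ht1 : Filter.Tendsto (fun m => sortedComp (sq m l.castSucc) k) (U : Filter ℕ)
              (nhds (sortedComp (sl l.castSucc) k)) := by
            have := tendsto_sortedComp (hsltend l.castSucc) k
            rwa [hGeq l.castSucc hcs0] at this
          have ht2 : Filter.Tendsto (fun m => sortedComp (sq m l.succ) k) (U : Filter ℕ)
              (nhds (sortedComp (sl l.succ) k)) := by
            have := tendsto_sortedComp (hsltend l.succ) k
            rwa [hGeq l.succ hs0] at this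
          have hle := le_of_tendsto_of_tendsto' ht1 ht2 hmono
          have hIH : sortedComp xstar k ≤ sortedComp (sl l.castSucc) k := by
            apply IH
            rw [hlcs]
          rw [← hlsucc]
          exact le_trans hIH hle
    have hchain' : ∀ j : Fin (n+1), (k : ℕ) < (j : ℕ) →
        sortedComp xstar k ≤ sortedComp (sl j) k := by
      intro j hj
      exact hchain ((j:ℕ) - (k:ℕ) - 1) j (by omega)
    -- (δ) upper bound via lexicographic maximality
    intro j hj
    rcases hstar.2 (sl j) (hslX j) with heq | ⟨i0, hpref, hlt⟩
    · rw [heq]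
    · rcases lt_trichotomy (k : ℕ) (i0 : ℕ) with h | h | h
      · exact (hpref k (by rwa [Fin.lt_def])).symm
      · exfalso
        have hkeq : i0 = k := Fin.ext h.symm
        rw [hkeq] at hlt
        have := hchain' j hj
        linarith
      · exfalso
        have := IHk i0 h j (lt_trans h hj)
        linarith
  -- the full induction
  have main : ∀ N : ℕ, ∀ i : Fin n, (i : ℕ) = N → ∀ j : Fin (n+1), (i : ℕ) < (j : ℕ) →
      sortedComp (sl j) i = sortedComp xstar i := by
    intro N
    induction N using Nat.strong_induction_on with
    | _ N IH =>
        intro i hi j hij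
        apply step i _ j hij
        intro i' hi' j' hij'
        exact IH (i' : ℕ) (by omega) i' rfl j' hij'
  -- pigeonhole for the bad index
  have hpig : ∃ k₀ : Fin n, {m | kk m = k₀} ∈ U := by
    have hun : (⋃ k ∈ (Set.univ : Set (Fin n)), {m | kk m = k}) ∈ U := by
      have : (⋃ k ∈ (Set.univ : Set (Fin n)), {m : ℕ | kk m = k}) = Set.univ := by
        ext m
        simp
      rw [this]
      exact Filter.univ_mem
    obtain ⟨k₀, _, hk₀⟩ := (Ultrafilter.finite_biUnion_mem_iff Set.finite_univ).mp hun
    exact ⟨k₀, hk₀⟩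
  obtain ⟨k₀, hk₀⟩ := hpig
  have hnpos : 0 < n := k₀.pos
  have hlast0 : (Fin.last n) ≠ 0 := by
    intro hcon
    have := congrArg Fin.val hcon
    simp [Fin.val_last] at this
    omega
  have hfin : sortedComp (sl (Fin.last n)) k₀ = sortedComp xstar k₀ := by
    apply main (k₀ : ℕ) k₀ rfl (Fin.last n)
    simpa [Fin.val_last] using k₀.isLt
  -- limit of the deficit
  have htlast : Filter.Tendsto (fun m => sortedComp (sq m (Fin.last n)) k₀) (U : Filter ℕ)
      (nhds (sortedComp (sl (Fin.last n)) k₀)) := by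
    have := tendsto_sortedComp (hsltend (Fin.last n)) k₀
    rwa [hGeq (Fin.last n) hlast0] at this
  have hev : ∀ᶠ m in (U : Filter ℕ),
      sortedComp (sq m (Fin.last n)) k₀ ≤ sortedComp xstar k₀ - δ := by
    have hm : {m | kk m = k₀} ∈ (U : Filter ℕ) := hk₀
    filter_upwards [hm] with m hmk
    have := hdef m
    rw [hmk] at this
    linarith
  have hlim := le_of_tendsto htlast hev
  rw [hfin] at hlim
  linarith

end Part7

end LexAux

theorem convex_polytope_lex_stable {n : ℕ} (X : Set (Fin n → ℝ))
    (S : Finset (Fin n → ℝ)) (hS : S.Nonempty) (hX : X = convexHull ℝ (S : Set (Fin n → ℝ)))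
    (xstar : Fin n → ℝ) (hstar : IsLexMax X xstar) :
    ∀ δ > 0, ∃ ε > 0, ∀ xhat, PossibleOutput X ε xhat →
      ∀ k : Fin n, sortedComp xstar k - sortedComp xhat k < δ := by
  intro δ hδ
  by_contra hcon
  push_neg at hcon
  have hch : ∀ m : ℕ, ∃ sq : Fin (n + 1) → (Fin n → ℝ), ∃ k : Fin n,
      (∀ l : Fin n, sq l.succ ∈ X ∧
        (∀ i : Fin n, i < l → sortedComp (sq l.castSucc) i ≤ sortedComp (sq l.succ) i) ∧
        Hfun X l (sq l.castSucc) - 1 / ((m : ℝ) + 1) ≤ sortedComp (sq l.succ) l) ∧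
      δ ≤ sortedComp xstar k - sortedComp (sq (Fin.last n)) k := by
    intro m
    have hpos : (0:ℝ) < 1 / ((m:ℝ) + 1) := by positivity
    obtain ⟨xhat, hPO, k, hk⟩ := hcon (1 / ((m:ℝ) + 1)) hpos
    obtain ⟨sq, hlast, hst⟩ := hPO
    exact ⟨sq, k, hst, by rw [hlast]; exact hk⟩
  choose sqf kkf hstepf hdeff using hch
  exact LexAux.main_contradiction hX hstar δ hδ sqf kkf hstepf hdeff
end

section
/- Let X = { x ∈ [−1,0]×[0,1]×[0,1] : x_1(x_3 − 1) ≥ x_2^2 } and, for ε ∈ (0,1), let x_ε = (−ε², ε/2, 3/4). Then x_ε ∈ X and: (a) σ_1(x_ε) ≥ sup_{x∈X} σ_1(x) − ε; (b) for all x ∈ X with σ_1(x) ≥ σ_1(x_ε), σ_2(x) ≤ ε, so σ_2(x_ε) ≥ sup{σ_2(x) : x ∈ X, σ_1(x) ≥ σ_1(x_ε)} − ε; (c) σ_3(x_ε) = 3/4 = sup{σ_3(x) : x ∈ X, σ_1(x) ≥ σ_1(x_ε), σ_2(x) ≥ σ_2(x_ε)}. Consequently X is not lexicographically stable (its lexicographic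 maximum is (0,0,1) with σ_3 = 1, while σ_3(x_ε) = 3/4 for all ε). -/
/-- Lexicographic stability. -/
def LexStable {n : ℕ} (X : Set (Fin n → ℝ)) : Prop :=
  ∀ δ > 0, ∃ ε > 0, ∀ xhat, PossibleOutput X ε xhat →
    ∀ xstar, IsLexMax X xstar → ∀ k : Fin n, sortedComp xstar k - sortedComp xhat k < δ

lemma sortedComp_of_monotone {n : ℕ} {x : Fin n → ℝ} (h : Monotone x) (k : Fin n) :
    sortedComp x k = x k := by
  unfold sortedComp
  rw [Tuple.sort_eq_refl_iff_monotone.2 h]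
  rfl

lemma sortedComp_comp_perm {n : ℕ} (x : Fin n → ℝ) (σ : Equiv.Perm (Fin n)) (k : Fin n) :
    sortedComp (x ∘ σ) k = sortedComp x k := by
  unfold sortedComp
  exact congrFun (Tuple.comp_perm_comp_sort_eq_comp_sort) k

lemma mono3 {x : Fin 3 → ℝ} (h01 : x 0 ≤ x 1) (h12 : x 1 ≤ x 2) : Monotone x := by
  intro i j hij
  fin_cases i <;> fin_cases j <;> simp_all <;> linarith

lemma sorted3 (x : Fin 3 → ℝ) (σ : Equiv.Perm (Fin 3)) (h : Monotone (x ∘ σ)) (k : Fin 3) :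
    sortedComp x k = x (σ k) := by
  rw [← sortedComp_comp_perm x σ, sortedComp_of_monotone h]
  rfl

lemma sortedX {x : Fin 3 → ℝ} (h0 : x 0 ≤ 0) (h1 : 0 ≤ x 1) (h2 : 0 ≤ x 2) :
    sortedComp x 0 = x 0 ∧ sortedComp x 1 = min (x 1) (x 2) ∧
      sortedComp x 2 = max (x 1) (x 2) := by
  rcases le_total (x 1) (x 2) with h | h
  · have hm : Monotone x := mono3 (by linarith) h
    rw [sortedComp_of_monotone hm, sortedComp_of_monotone hm, sortedComp_of_monotone hm,
      min_eq_left h, max_eq_right h]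
    exact ⟨rfl, rfl, rfl⟩
  · set σ : Equiv.Perm (Fin 3) := Equiv.swap 1 2 with hσ
    have e0 : (x ∘ σ) 0 = x 0 := by simp [hσ, Equiv.swap_apply_of_ne_of_ne]
    have e1 : (x ∘ σ) 1 = x 2 := by simp [hσ]
    have e2 : (x ∘ σ) 2 = x 1 := by simp [hσ]
    have hm : Monotone (x ∘ σ) := by
      apply mono3
      · rw [e0, e1]; linarith
      · rw [e1, e2]; exact h
    rw [sorted3 x σ hm 0, sorted3 x σ hm 1, sorted3 x σ hm 2]
    refine ⟨by simpa using e0, ?_, ?_⟩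
    · rw [min_eq_right h]; simpa using e1
    · rw [max_eq_left h]; simpa using e2

lemma possibleOutput_mono {n : ℕ} {X : Set (Fin n → ℝ)} {ε ε' : ℝ} (h : ε' ≤ ε)
    {out : Fin n → ℝ} (ho : PossibleOutput X ε' out) : PossibleOutput X ε out := by
  obtain ⟨s, h1, h2⟩ := ho
  exact ⟨s, h1, fun k => ⟨(h2 k).1, (h2 k).2.1, by linarith [(h2 k).2.2]⟩⟩

set_option maxHeartbeats 2000000 in
theorem compact_convex_not_lex_stable :
    let X : Set (Fin 3 → ℝ) := {x | x 0 ∈ Set.Icc (-1 : ℝ) 0 ∧ x 1 ∈ Set.Icc (0 : ℝ) 1 ∧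
      x 2 ∈ Set.Icc (0 : ℝ) 1 ∧ (x 1) ^ 2 ≤ x 0 * (x 2 - 1)}
    (∀ ε : ℝ, ε ∈ Set.Ioo (0 : ℝ) 1 →
      let xe : Fin 3 → ℝ := ![-ε ^ 2, ε / 2, 3 / 4]
      xe ∈ X ∧
      -- (a)
      sSup {v : ℝ | ∃ x ∈ X, v = sortedComp x 0} - ε ≤ sortedComp xe 0 ∧
      -- (b)
      (∀ x ∈ X, sortedComp xe 0 ≤ sortedComp x 0 → sortedComp x 1 ≤ ε) ∧
      sSup {v : ℝ | ∃ x ∈ X, sortedComp xe 0 ≤ sortedComp x 0 ∧ v = sortedComp x 1} - ε ≤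
        sortedComp xe 1 ∧
      -- (c)
      sortedComp xe 2 = 3 / 4 ∧
      (3 / 4 : ℝ) = sSup {v : ℝ | ∃ x ∈ X, sortedComp xe 0 ≤ sortedComp x 0 ∧
        sortedComp xe 1 ≤ sortedComp x 1 ∧ v = sortedComp x 2} ∧
      PossibleOutput X ε xe) ∧
    IsLexMax X ![0, 0, 1] ∧ sortedComp (![0, 0, 1] : Fin 3 → ℝ) 2 = 1 ∧
    ¬ LexStable X := by
  intro X
  -- sorted components of the candidate lexicographic maximum
  have hymono : Monotone (![0, 0, 1] : Fin 3 → ℝ) := by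
    apply mono3 <;> norm_num <;> exact zero_le_one
  have hy0 : sortedComp (![0, 0, 1] : Fin 3 → ℝ) 0 = 0 := by
    rw [sortedComp_of_monotone hymono]; rfl
  have hy1 : sortedComp (![0, 0, 1] : Fin 3 → ℝ) 1 = 0 := by
    rw [sortedComp_of_monotone hymono]; rfl
  have hy2 : sortedComp (![0, 0, 1] : Fin 3 → ℝ) 2 = 1 := by
    rw [sortedComp_of_monotone hymono]; rfl
  -- the main body, for each ε
  have main : ∀ ε : ℝ, ε ∈ Set.Ioo (0 : ℝ) 1 →
      let xe : Fin 3 → ℝ := ![-ε ^ 2, ε / 2, 3 / 4]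
      xe ∈ X ∧
      sSup {v : ℝ | ∃ x ∈ X, v = sortedComp x 0} - ε ≤ sortedComp xe 0 ∧
      (∀ x ∈ X, sortedComp xe 0 ≤ sortedComp x 0 → sortedComp x 1 ≤ ε) ∧
      sSup {v : ℝ | ∃ x ∈ X, sortedComp xe 0 ≤ sortedComp x 0 ∧ v = sortedComp x 1} - ε ≤
        sortedComp xe 1 ∧
      sortedComp xe 2 = 3 / 4 ∧
      (3 / 4 : ℝ) = sSup {v : ℝ | ∃ x ∈ X, sortedComp xe 0 ≤ sortedComp x 0 ∧
        sortedComp xe 1 ≤ sortedComp x 1 ∧ v = sortedComp x 2} ∧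
      PossibleOutput X ε xe := by
    intro ε hε xe
    obtain ⟨hε0, hε1⟩ := hε
    have he0 : xe 0 = -ε ^ 2 := rfl
    have he1 : xe 1 = ε / 2 := rfl
    have he2 : xe 2 = 3 / 4 := rfl
    have hxemono : Monotone xe := by
      apply mono3
      · rw [he0, he1]; nlinarith
      · rw [he1, he2]; linarith
    have hs0 : sortedComp xe 0 = -ε ^ 2 := by rw [sortedComp_of_monotone hxemono, he0]
    have hs1 : sortedComp xe 1 = ε / 2 := by rw [sortedComp_of_monotone hxemono, he1]
    have hs2 : sortedComp xe 2 = 3 / 4 := by rw [sortedComp_of_monotone hxemono, he2]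
    have hmem : xe ∈ X := by
      refine ⟨⟨by rw [he0]; nlinarith, by rw [he0]; nlinarith⟩,
        ⟨by rw [he1]; linarith, by rw [he1]; linarith⟩,
        ⟨by rw [he2]; norm_num, by rw [he2]; norm_num⟩, ?_⟩
      rw [he0, he1, he2]; nlinarith
    -- facts about a general member of X
    have hXfacts : ∀ x ∈ X, sortedComp x 0 = x 0 ∧ sortedComp x 1 = min (x 1) (x 2) ∧
        sortedComp x 2 = max (x 1) (x 2) := by
      rintro x ⟨⟨_, h0r⟩, ⟨h1l, _⟩, ⟨h2l, _⟩, _⟩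
      exact sortedX h0r h1l h2l
    -- (a) : sup of first sorted component is ≤ 0
    have supa : ∀ v ∈ {v : ℝ | ∃ x ∈ X, v = sortedComp x 0}, v ≤ 0 := by
      rintro v ⟨x, hx, rfl⟩
      rw [(hXfacts x hx).1]
      exact hx.1.2
    have ha : sSup {v : ℝ | ∃ x ∈ X, v = sortedComp x 0} ≤ 0 := Real.sSup_le supa le_rfl
    -- (b) key estimate
    have hb : ∀ x ∈ X, -ε ^ 2 ≤ x 0 → sortedComp x 1 ≤ ε := by
      rintro x hx h0
      have hf := (hXfacts x hx).2.1
      obtain ⟨⟨_, h0r⟩, ⟨h1l, _⟩, ⟨h2l, h2r⟩, hq⟩ := hx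
      have hx1 : x 1 ≤ ε := by nlinarith
      rw [hf]
      exact le_trans (min_le_left _ _) hx1
    -- (c) key estimate
    have hc : ∀ x ∈ X, -ε ^ 2 ≤ x 0 → ε / 2 ≤ min (x 1) (x 2) → sortedComp x 2 ≤ 3 / 4 := by
      rintro x hx h0 hmin
      have hf := (hXfacts x hx).2.2
      obtain ⟨⟨_, h0r⟩, ⟨h1l, h1r⟩, ⟨h2l, h2r⟩, hq⟩ := hx
      have hm1 : ε / 2 ≤ x 1 := le_trans hmin (min_le_left _ _)
      have hm2 : ε / 2 ≤ x 2 := le_trans hmin (min_le_right _ _)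
      have key : x 1 ^ 2 ≤ ε ^ 2 * (1 - x 2) := by
        nlinarith [mul_nonneg (by linarith : (0:ℝ) ≤ x 0 + ε ^ 2)
          (by linarith : (0:ℝ) ≤ 1 - x 2)]
      have h2b : x 2 ≤ 3 / 4 := by nlinarith [mul_pos hε0 hε0]
      have h1b : x 1 ≤ 3 / 4 := by
        nlinarith [mul_nonneg (by linarith : (0:ℝ) ≤ 1 - ε)
          (by nlinarith : (0:ℝ) ≤ 1 + ε - ε ^ 2)]
      rw [hf]
      exact max_le h1b h2b
    have hb' : ∀ x ∈ X, sortedComp xe 0 ≤ sortedComp x 0 → sortedComp x 1 ≤ ε := by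
      intro x hx h
      rw [hs0, (hXfacts x hx).1] at h
      exact hb x hx h
    refine ⟨hmem, ?_, hb', ?_, hs2, ?_, ?_⟩
    · rw [hs0]; nlinarith
    · have hsup : sSup {v : ℝ | ∃ x ∈ X, sortedComp xe 0 ≤ sortedComp x 0 ∧
          v = sortedComp x 1} ≤ ε := by
        apply Real.sSup_le _ hε0.le
        rintro v ⟨x, hx, h0, rfl⟩
        exact hb' x hx h0
      rw [hs1]; linarith
    · have hub : ∀ v ∈ {v : ℝ | ∃ x ∈ X, sortedComp xe 0 ≤ sortedComp x 0 ∧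
          sortedComp xe 1 ≤ sortedComp x 1 ∧ v = sortedComp x 2}, v ≤ 3 / 4 := by
        rintro v ⟨x, hx, h0, h1, rfl⟩
        rw [hs0, (hXfacts x hx).1] at h0
        rw [hs1, (hXfacts x hx).2.1] at h1
        exact hc x hx h0 h1
      refine le_antisymm (le_csSup ⟨3 / 4, fun v hv => hub v hv⟩
        ⟨xe, hmem, le_rfl, le_rfl, hs2.symm⟩) (Real.sSup_le hub (by norm_num))
    · have hH0 : Hfun X 0 xe ≤ 0 := by
        apply Real.sSup_le _ le_rfl
        rintro v ⟨z, hz, _, rfl⟩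
        rw [(hXfacts z hz).1]
        exact hz.1.2
      have hH1 : Hfun X 1 xe ≤ ε := by
        apply Real.sSup_le _ hε0.le
        rintro v ⟨z, hz, hcond, rfl⟩
        have h0 := hcond 0 (by decide)
        rw [hs0, (hXfacts z hz).1] at h0
        exact hb z hz h0
      have hH2 : Hfun X 2 xe ≤ 3 / 4 := by
        apply Real.sSup_le _ (by norm_num)
        rintro v ⟨z, hz, hcond, rfl⟩
        have h0 := hcond 0 (by decide)
        have h1 := hcond 1 (by decide)
        rw [hs0, (hXfacts z hz).1] at h0
        rw [hs1, (hXfacts z hz).2.1] at h1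
        exact hc z hz h0 h1
      have hgoal : ∀ k : Fin 3, Hfun X k xe - ε ≤ sortedComp xe k := by
        intro k
        have hk : k = 0 ∨ k = 1 ∨ k = 2 := by omega
        rcases hk with rfl | rfl | rfl
        · rw [hs0]; nlinarith
        · rw [hs1]; linarith
        · rw [hs2]; linarith
      exact ⟨fun _ => xe, rfl, fun k => ⟨hmem, fun i _ => le_rfl, hgoal k⟩⟩
  -- lexicographic maximum
  have hXfacts : ∀ x ∈ X, sortedComp x 0 = x 0 ∧ sortedComp x 1 = min (x 1) (x 2) ∧
      sortedComp x 2 = max (x 1) (x 2) := by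
    rintro x ⟨⟨_, h0r⟩, ⟨h1l, _⟩, ⟨h2l, _⟩, _⟩
    exact sortedX h0r h1l h2l
  have hlexmax : IsLexMax X ![0, 0, 1] := by
    constructor
    · exact ⟨⟨by norm_num, le_rfl⟩, ⟨le_rfl, by norm_num⟩, ⟨zero_le_one, le_rfl⟩, by norm_num⟩
    · intro x hx
      have hf := hXfacts x hx
      obtain ⟨⟨h0l, h0r⟩, ⟨h1l, h1r⟩, ⟨h2l, h2r⟩, hq⟩ := hx
      rcases lt_or_eq_of_le h0r with h0lt | h0eq
      · right
        refine ⟨0, fun j hj => absurd hj (by simp), ?_⟩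
        rw [hy0, hf.1]
        exact h0lt
      · have hx1 : x 1 = 0 := by nlinarith [sq_nonneg (x 1)]
        rcases eq_or_lt_of_le h2r with h2e | h2lt
        · left
          funext i
          fin_cases i
          · simpa using h0eq
          · simpa using hx1
          · simpa using h2e
        · right
          refine ⟨2, ?_, ?_⟩
          · intro j hj
            fin_cases j
            · show sortedComp ![(0:ℝ), 0, 1] 0 = sortedComp x 0
              rw [hy0, hf.1, ← h0eq]
            · show sortedComp ![(0:ℝ), 0, 1] 1 = sortedComp x 1
              rw [hy1, hf.2.1, hx1]
              exact (min_eq_left h2l).symm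
            · exact absurd hj (by simp)
          · rw [hy2, hf.2.2, hx1, max_eq_right h2l]
            exact h2lt
  refine ⟨main, hlexmax, hy2, ?_⟩
  intro h
  obtain ⟨ε, hεpos, H⟩ := h (1 / 8) (by norm_num)
  set ε' := min ε (1 / 2) with hε'def
  have hε'mem : ε' ∈ Set.Ioo (0 : ℝ) 1 :=
    ⟨lt_min hεpos (by norm_num), lt_of_le_of_lt (min_le_right _ _) (by norm_num)⟩
  obtain ⟨_, _, _, _, hs2', _, hpo⟩ := main ε' hε'mem
  have hpo' : PossibleOutput X ε ![-ε' ^ 2, ε' / 2, 3 / 4] :=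
    possibleOutput_mono (min_le_left _ _) hpo
  have hcon := H _ hpo' ![0, 0, 1] hlexmax 2
  rw [hy2, hs2'] at hcon
  norm_num at hcon
end
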